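/- Pumping preserves k-spacedness and fairness: Given a fair pumpable path in a colored Büchi graph in which every block contains a repeated vertex, for every k ∈ ℕ, pumping each repetition k times yields a fair path whose induced coloring is k-spaced (every block has length at least k and there are infinitely many changepoints). -/
import Mathlib


namespace PLDLPaper

/-- Propositional formulas over atomic propositions `P`. -/
inductive PropF (P : Type) where
  | tru : PropF P
  | fls : PropF P
  | atom : P → PropF P
  | natom : P → PropF P
  | conj : PropF P → PropF P → PropF P
  | disj : PropF P → PropF P → PropF P

def PropF.eval {P : Type} (A : P → Prop) : PropF P → Prop
  | .tru => True
  | .fls => False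
  | .atom p => A p
  | .natom p => ¬ A p
  | .conj φ ψ => φ.eval A ∧ ψ.eval A
  | .disj φ ψ => φ.eval A ∨ ψ.eval A

mutual
/-- PLDL formulas (in negation normal form) over atomic propositions `P`
and variables `V`, extended with the fresh coloring proposition `p`
(`colp`/`colnp`) and the changepoint-bounded operators of LDL_cp. -/
inductive Frm (P V : Type) where
  | pos : P → Frm P V
  | neg : P → Frm P V
  | colp : Frm P V
  | colnp : Frm P V
  | and : Frm P V → Frm P V → Frm P V
  | or : Frm P V → Frm P V → Frm P V
  | dia : RE P V → Frm P V → Frm P V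
  | box : RE P V → Frm P V → Frm P V
  | diaLe : RE P V → V → Frm P V → Frm P V
  | boxLe : RE P V → V → Frm P V → Frm P V
  | diaCp : RE P V → Frm P V → Frm P V
  | boxCp : RE P V → Frm P V → Frm P V
/-- Regular expressions with tests. -/
inductive RE (P V : Type) where
  | prop : PropF P → RE P V
  | test : Frm P V → RE P V
  | plus : RE P V → RE P V → RE P V
  | comp : RE P V → RE P V → RE P V
  | star : RE P V → RE P V
end

/-- `n` is a changepoint of the color sequence `c`. -/
def Changepoint (c : ℕ → Prop) (n : ℕ) : Prop :=
  n = 0 ∨ ¬ (c (n - 1) ↔ c n)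

/-- The infix at positions `n, …, n + j - 1` contains at most one changepoint. -/
def AtMostOneCP (c : ℕ → Prop) (n j : ℕ) : Prop :=
  ∀ m₁ m₂, n ≤ m₁ → m₁ < n + j → n ≤ m₂ → m₂ < n + j →
    Changepoint c m₁ → Changepoint c m₂ → m₁ = m₂

mutual
/-- Satisfaction `(w, n, α) ⊨ φ`; the color of position `n` (truth value of the
fresh proposition `p`) is `c n`. -/
def Sat {P V : Type} (w : ℕ → P → Prop) (c : ℕ → Prop) (α : V → ℕ) :
    Frm P V → ℕ → Prop
  | .pos p, n => w n p
  | .neg p, n => ¬ w n p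
  | .colp, n => c n
  | .colnp, n => ¬ c n
  | .and φ ψ, n => Sat w c α φ n ∧ Sat w c α ψ n
  | .or φ ψ, n => Sat w c α φ n ∨ Sat w c α ψ n
  | .dia r ψ, n => ∃ j, Match w c α r n (n + j) ∧ Sat w c α ψ (n + j)
  | .box r ψ, n => ∀ j, Match w c α r n (n + j) → Sat w c α ψ (n + j)
  | .diaLe r z ψ, n => ∃ j, j ≤ α z ∧ Match w c α r n (n + j) ∧ Sat w c α ψ (n + j)
  | .boxLe r z ψ, n => ∀ j, j ≤ α z → Match w c α r n (n + j) → Sat w c α ψ (n + j)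
  | .diaCp r ψ, n => ∃ j, Match w c α r n (n + j) ∧ AtMostOneCP c n j ∧ Sat w c α ψ (n + j)
  | .boxCp r ψ, n => ∀ j, Match w c α r n (n + j) → AtMostOneCP c n j → Sat w c α ψ (n + j)
/-- The match relation `R(r, w, α)`. -/
def Match {P V : Type} (w : ℕ → P → Prop) (c : ℕ → Prop) (α : V → ℕ) :
    RE P V → ℕ → ℕ → Prop
  | .prop φ, m, n => n = m + 1 ∧ φ.eval (w m)
  | .test ψ, m, n => n = m ∧ Sat w c α ψ m
  | .plus r₀ r₁, m, n => Match w c α r₀ m n ∨ Match w c α r₁ m n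
  | .comp r₀ r₁, m, n => ∃ k, Match w c α r₀ m k ∧ Match w c α r₁ k n
  | .star r, m, n => ∃ (k : ℕ) (f : ℕ → ℕ), f 0 = m ∧ f k = n ∧
      ∀ i, i < k → Match w c α r (f i) (f (i + 1))
end

variable {P V : Type}

mutual
/-- Size of a formula. -/
def Frm.size : Frm P V → ℕ
  | .pos _ => 1
  | .neg _ => 1
  | .colp => 1
  | .colnp => 1
  | .and φ ψ => 1 + φ.size + ψ.size
  | .or φ ψ => 1 + φ.size + ψ.size
  | .dia r ψ => 1 + r.size + ψ.size
  | .box r ψ => 1 + r.size + ψ.size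
  | .diaLe r _ ψ => 1 + r.size + ψ.size
  | .boxLe r _ ψ => 1 + r.size + ψ.size
  | .diaCp r ψ => 1 + r.size + ψ.size
  | .boxCp r ψ => 1 + r.size + ψ.size
/-- Size (length) of a regular expression. -/
def RE.size : RE P V → ℕ
  | .prop _ => 1
  | .test ψ => 1 + ψ.size
  | .plus r₀ r₁ => 1 + r₀.size + r₁.size
  | .comp r₀ r₁ => 1 + r₀.size + r₁.size
  | .star r => 1 + r.size
end

mutual
/-- Variables parameterizing diamond operators. -/
def Frm.dvars [DecidableEq V] : Frm P V → Finset V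
  | .pos _ => ∅
  | .neg _ => ∅
  | .colp => ∅
  | .colnp => ∅
  | .and φ ψ => φ.dvars ∪ ψ.dvars
  | .or φ ψ => φ.dvars ∪ ψ.dvars
  | .dia r ψ => r.dvars ∪ ψ.dvars
  | .box r ψ => r.dvars ∪ ψ.dvars
  | .diaLe r z ψ => insert z (r.dvars ∪ ψ.dvars)
  | .boxLe r _ ψ => r.dvars ∪ ψ.dvars
  | .diaCp r ψ => r.dvars ∪ ψ.dvars
  | .boxCp r ψ => r.dvars ∪ ψ.dvars
def RE.dvars [DecidableEq V] : RE P V → Finset V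
  | .prop _ => ∅
  | .test ψ => ψ.dvars
  | .plus r₀ r₁ => r₀.dvars ∪ r₁.dvars
  | .comp r₀ r₁ => r₀.dvars ∪ r₁.dvars
  | .star r => r.dvars
end

mutual
/-- Variables parameterizing box operators. -/
def Frm.bvars [DecidableEq V] : Frm P V → Finset V
  | .pos _ => ∅
  | .neg _ => ∅
  | .colp => ∅
  | .colnp => ∅
  | .and φ ψ => φ.bvars ∪ ψ.bvars
  | .or φ ψ => φ.bvars ∪ ψ.bvars
  | .dia r ψ => r.bvars ∪ ψ.bvars
  | .box r ψ => r.bvars ∪ ψ.bvars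
  | .diaLe r _ ψ => r.bvars ∪ ψ.bvars
  | .boxLe r z ψ => insert z (r.bvars ∪ ψ.bvars)
  | .diaCp r ψ => r.bvars ∪ ψ.bvars
  | .boxCp r ψ => r.bvars ∪ ψ.bvars
def RE.bvars [DecidableEq V] : RE P V → Finset V
  | .prop _ => ∅
  | .test ψ => ψ.bvars
  | .plus r₀ r₁ => r₀.bvars ∪ r₁.bvars
  | .comp r₀ r₁ => r₀.bvars ∪ r₁.bvars
  | .star r => r.bvars
end

mutual
/-- The formula contains no changepoint-bounded operators. -/
def Frm.noCp : Frm P V → Prop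
  | .pos _ => True
  | .neg _ => True
  | .colp => True
  | .colnp => True
  | .and φ ψ => φ.noCp ∧ ψ.noCp
  | .or φ ψ => φ.noCp ∧ ψ.noCp
  | .dia r ψ => r.noCp ∧ ψ.noCp
  | .box r ψ => r.noCp ∧ ψ.noCp
  | .diaLe r _ ψ => r.noCp ∧ ψ.noCp
  | .boxLe r _ ψ => r.noCp ∧ ψ.noCp
  | .diaCp _ _ => False
  | .boxCp _ _ => False
def RE.noCp : RE P V → Prop
  | .prop _ => True
  | .test ψ => ψ.noCp
  | .plus r₀ r₁ => r₀.noCp ∧ r₁.noCp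
  | .comp r₀ r₁ => r₀.noCp ∧ r₁.noCp
  | .star r => r.noCp
end

mutual
/-- The formula does not mention the fresh coloring proposition `p`. -/
def Frm.noCol : Frm P V → Prop
  | .pos _ => True
  | .neg _ => True
  | .colp => False
  | .colnp => False
  | .and φ ψ => φ.noCol ∧ ψ.noCol
  | .or φ ψ => φ.noCol ∧ ψ.noCol
  | .dia r ψ => r.noCol ∧ ψ.noCol
  | .box r ψ => r.noCol ∧ ψ.noCol
  | .diaLe r _ ψ => r.noCol ∧ ψ.noCol
  | .boxLe r _ ψ => r.noCol ∧ ψ.noCol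
  | .diaCp r ψ => r.noCol ∧ ψ.noCol
  | .boxCp r ψ => r.noCol ∧ ψ.noCol
def RE.noCol : RE P V → Prop
  | .prop _ => True
  | .test ψ => ψ.noCol
  | .plus r₀ r₁ => r₀.noCol ∧ r₁.noCol
  | .comp r₀ r₁ => r₀.noCol ∧ r₁.noCol
  | .star r => r.noCol
end

/-- A genuine PLDL formula: no changepoint-bounded operators and no
occurrence of the fresh proposition `p`. -/
def IsPLDL (φ : Frm P V) : Prop := φ.noCp ∧ φ.noCol

/-- Well-formedness: no variable parameterizes both a diamond and a box. -/
def WellFormed [DecidableEq V] (φ : Frm P V) : Prop :=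
  ∀ z, z ∈ φ.dvars → z ∉ φ.bvars

/-- Dualization: the negation of a formula, pushing negations to atoms. -/
def Frm.not : Frm P V → Frm P V
  | .pos p => .neg p
  | .neg p => .pos p
  | .colp => .colnp
  | .colnp => .colp
  | .and φ ψ => .or φ.not ψ.not
  | .or φ ψ => .and φ.not ψ.not
  | .dia r ψ => .box r ψ.not
  | .box r ψ => .dia r ψ.not
  | .diaLe r z ψ => .boxLe r z ψ.not
  | .boxLe r z ψ => .diaLe r z ψ.not
  | .diaCp r ψ => .boxCp r ψ.not
  | .boxCp r ψ => .diaCp r ψ.not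

mutual
/-- `rel φ`: replace every parameterized operator by the corresponding
changepoint-bounded operator. -/
def Frm.rel : Frm P V → Frm P V
  | .pos p => .pos p
  | .neg p => .neg p
  | .colp => .colp
  | .colnp => .colnp
  | .and φ ψ => .and φ.rel ψ.rel
  | .or φ ψ => .or φ.rel ψ.rel
  | .dia r ψ => .dia r.rel ψ.rel
  | .box r ψ => .box r.rel ψ.rel
  | .diaLe r _ ψ => .diaCp r.rel ψ.rel
  | .boxLe r _ ψ => .boxCp r.rel ψ.rel
  | .diaCp r ψ => .diaCp r.rel ψ.rel
  | .boxCp r ψ => .boxCp r.rel ψ.rel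
def RE.rel : RE P V → RE P V
  | .prop φ => .prop φ
  | .test ψ => .test ψ.rel
  | .plus r₀ r₁ => .plus r₀.rel r₁.rel
  | .comp r₀ r₁ => .comp r₀.rel r₁.rel
  | .star r => .star r.rel
end

/-- `θ_∞p = [tt*]⟨tt*⟩p`: the fresh proposition `p` holds infinitely often. -/
def thetaInfP : Frm P V := .box (.star (.prop .tru)) (.dia (.star (.prop .tru)) .colp)

/-- `θ_∞¬p`. -/
def thetaInfNP : Frm P V := .box (.star (.prop .tru)) (.dia (.star (.prop .tru)) .colnp)

/-- `c(φ) = rel(φ) ∧ θ_∞p ∧ θ_∞¬p`. -/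
def cFrm (φ : Frm P V) : Frm P V := .and φ.rel (.and thetaInfP thetaInfNP)

/-- `[i, j)` is a block of the coloring `c`: `i` and `j` are consecutive
changepoints. -/
def IsBlock (c : ℕ → Prop) (i j : ℕ) : Prop :=
  i < j ∧ Changepoint c i ∧ Changepoint c j ∧
    ∀ m, i < m → m < j → ¬ Changepoint c m

/-- Infinitely many changepoints. -/
def InfCP (c : ℕ → Prop) : Prop := ∀ N, ∃ n, N < n ∧ Changepoint c n

/-- Every block has length at most `k` (and there are infinitely many
changepoints). -/
def kBounded (c : ℕ → Prop) (k : ℕ) : Prop :=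
  InfCP c ∧ ∀ i j, IsBlock c i j → j - i ≤ k

/-- Infinitely many changepoints and every block has length at least `k`. -/
def kSpaced (c : ℕ → Prop) (k : ℕ) : Prop :=
  InfCP c ∧ ∀ i j, IsBlock c i j → k ≤ j - i

/-! ### Auxiliary material for the pumping theorem -/

private lemma modSucc (x d : ℕ) (hd : 0 < d) :
    ((x+1) % d = x % d + 1) ∨ ((x+1) % d = 0 ∧ x % d + 1 = d) := by
  rcases Nat.lt_or_ge (x % d + 1) d with h1 | h1
  · left
    conv_lhs => rw [← Nat.div_add_mod x d]
    rw [Nat.add_assoc, Nat.mul_add_mod]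
    exact Nat.mod_eq_of_lt h1
  · right
    have h2 : x % d + 1 = d := by have := Nat.mod_lt x hd; omega
    refine ⟨?_, h2⟩
    conv_lhs => rw [← Nat.div_add_mod x d]
    rw [Nat.add_assoc, Nat.mul_add_mod, h2, Nat.mod_self]

private lemma predMulMod (k d : ℕ) (hd : 0 < d) (hk : 0 < k) :
    (k * d - 1) % d = d - 1 := by
  have h1 : d ≤ k * d := Nat.le_mul_of_pos_left d hk
  have h2 : k * d - 1 = (d - 1) + (k - 1) * d := by
    have h3 : (k-1) * d = k * d - d := by rw [Nat.sub_one_mul]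
    omega
  rw [h2, Nat.add_mul_mod_self_right, Nat.mod_eq_of_lt (by omega)]

/-- Within a block the color is constant. -/
lemma block_color {c : ℕ → Prop} {i j : ℕ} (hb : IsBlock c i j) :
    ∀ x, i ≤ x → x < j → (c x ↔ c i) := by
  intro x
  induction x with
  | zero =>
    intro h1 _
    have : i = 0 := by omega
    rw [this]
  | succ x ih =>
    intro h1 h2
    rcases Nat.lt_or_ge x i with h | h
    · have : x + 1 = i := by omega
      rw [this]
    · have hx : c x ↔ c i := ih h (by omega)
      have hncp := hb.2.2.2 (x+1) (by omega) h2
      simp only [Changepoint, Nat.add_sub_cancel, not_or, not_not] at hncp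
      exact hncp.2.symm.trans hx

open scoped Classical in
/-- The increasing enumeration of changepoints. -/
noncomputable def cpSeq (c : ℕ → Prop) (h : InfCP c) : ℕ → ℕ
  | 0 => 0
  | n+1 => Nat.find (h (cpSeq c h n))

lemma cpSeq_zero (c : ℕ → Prop) (h : InfCP c) : cpSeq c h 0 = 0 := rfl

open scoped Classical in
lemma cpSeq_succ_spec (c : ℕ → Prop) (h : InfCP c) (n : ℕ) :
    cpSeq c h n < cpSeq c h (n+1) ∧ Changepoint c (cpSeq c h (n+1)) :=
  Nat.find_spec (h (cpSeq c h n))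

open scoped Classical in
lemma cpSeq_min (c : ℕ → Prop) (h : InfCP c) (n : ℕ) {m : ℕ}
    (h1 : cpSeq c h n < m) (h2 : Changepoint c m) : cpSeq c h (n+1) ≤ m :=
  Nat.find_min' (h (cpSeq c h n)) ⟨h1, h2⟩

lemma cpSeq_cp (c : ℕ → Prop) (h : InfCP c) : ∀ n, Changepoint c (cpSeq c h n)
  | 0 => Or.inl rfl
  | n+1 => (cpSeq_succ_spec c h n).2

lemma cpSeq_block (c : ℕ → Prop) (h : InfCP c) (n : ℕ) :
    IsBlock c (cpSeq c h n) (cpSeq c h (n+1)) := by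
  refine ⟨(cpSeq_succ_spec c h n).1, cpSeq_cp c h n, (cpSeq_succ_spec c h n).2, ?_⟩
  intro m h1 h2 hmcp
  exact absurd (cpSeq_min c h n h1 hmcp) (by omega)

lemma cpSeq_strictMono (c : ℕ → Prop) (h : InfCP c) : StrictMono (cpSeq c h) :=
  strictMono_nat_of_lt_succ fun n => (cpSeq_succ_spec c h n).1

lemma cpSeq_cover (c : ℕ → Prop) (h : InfCP c) :
    ∀ n, ∃ m, cpSeq c h m ≤ n ∧ n < cpSeq c h (m+1) := by
  intro n
  induction n with
  | zero =>
    refine ⟨0, le_of_eq (cpSeq_zero c h), ?_⟩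
    have := (cpSeq_succ_spec c h 0).1
    omega
  | succ n ih =>
    obtain ⟨m, h1, h2⟩ := ih
    rcases Nat.lt_or_ge (n+1) (cpSeq c h (m+1)) with hlt | hge
    · exact ⟨m, by omega, hlt⟩
    · exact ⟨m+1, hge, by have := (cpSeq_succ_spec c h (m+1)).1; omega⟩

lemma cpSeq_adj (c : ℕ → Prop) (h : InfCP c) (n : ℕ) :
    ¬ (c (cpSeq c h (n+1)) ↔ c (cpSeq c h n)) := by
  have hblk := cpSeq_block c h n
  have hlt := (cpSeq_succ_spec c h n).1
  have h1 : c (cpSeq c h (n+1) - 1) ↔ c (cpSeq c h n) :=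
    block_color hblk _ (by omega) (by omega)
  rcases (cpSeq_succ_spec c h n).2 with h0 | h2
  · omega
  · intro hiff
    exact h2 (h1.trans hiff.symm)

/-- The pumped index function inside one block. -/
def gbFun (i a b k t : ℕ) : ℕ :=
  if t < a - i then i + t
  else if t < (a - i) + k * (b - a) then a + (t - (a - i)) % (b - a)
  else i + t - k * (b - a)

lemma gbFun_mem {i a b j k t : ℕ} (hia : i ≤ a) (hab : a < b) (hbj : b < j)
    (ht : t < (j - i) + k * (b - a)) :
    i ≤ gbFun i a b k t ∧ gbFun i a b k t < j := by
  have hd : 0 < b - a := by omega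
  have hm : (t - (a - i)) % (b - a) < b - a := Nat.mod_lt _ hd
  simp only [gbFun]
  split_ifs with h1 h2 <;> omega

lemma gbFun_zero {i a b : ℕ} (k : ℕ) (hia : i ≤ a) (hab : a < b) :
    gbFun i a b k 0 = i := by
  simp only [gbFun]
  split_ifs with h1 h2
  · omega
  · have h3 : 0 - (a - i) = 0 := by omega
    rw [h3, Nat.zero_mod]
    omega
  · omega

lemma gbFun_last {i a b j : ℕ} (k : ℕ) (hia : i ≤ a) (hab : a < b) (hbj : b < j) :
    gbFun i a b k ((j - i) + k * (b - a) - 1) = j - 1 := by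
  simp only [gbFun]
  rw [if_neg (by omega), if_neg (by omega)]
  omega

lemma gbFun_surj {i a b j : ℕ} (k : ℕ) (hia : i ≤ a) (hab : a < b) (hbj : b < j)
    (x : ℕ) (hx : i ≤ x) (hxj : x < j) :
    ∃ t, t < (j - i) + k * (b - a) ∧ gbFun i a b k t = x := by
  rcases Nat.lt_or_ge x a with hlt | hge
  · refine ⟨x - i, by omega, ?_⟩
    simp only [gbFun]
    rw [if_pos (by omega)]
    omega
  · refine ⟨(a - i) + k * (b - a) + (x - a), by omega, ?_⟩
    simp only [gbFun]
    rw [if_neg (by omega), if_neg (by omega)]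
    omega

lemma gbFun_step {i a b j k t : ℕ} (hia : i ≤ a) (hab : a < b) (hbj : b < j)
    (ht : t + 1 < (j - i) + k * (b - a)) :
    gbFun i a b k (t+1) = gbFun i a b k t + 1 ∨
      (gbFun i a b k (t+1) = a ∧ gbFun i a b k t + 1 = b) := by
  have hd : 0 < b - a := by omega
  simp only [gbFun]
  rcases Nat.lt_or_ge (t+1) (a - i) with h1 | h1
  · rw [if_pos h1, if_pos (by omega)]
    left; omega
  rcases Nat.lt_or_ge (t+1) ((a - i) + k * (b - a)) with h2 | h2
  · rw [if_neg (by omega), if_pos h2]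
    rcases Nat.lt_or_ge t (a - i) with h3 | h3
    · -- t + 1 = a - i
      rw [if_pos h3]
      have h4 : t + 1 - (a - i) = 0 := by omega
      rw [h4, Nat.zero_mod]
      left; omega
    · rw [if_neg (by omega), if_pos (by omega)]
      have h4 : t + 1 - (a - i) = (t - (a - i)) + 1 := by omega
      rw [h4]
      rcases modSucc (t - (a - i)) (b - a) hd with h5 | ⟨h5, h6⟩
      · left; omega
      · right; constructor <;> omega
  · rw [if_neg (by omega), if_neg (by omega)]
    rcases Nat.lt_or_ge t ((a - i) + k * (b - a)) with h3 | h3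
    · -- t + 1 = (a - i) + k * (b - a)
      rcases Nat.lt_or_ge t (a - i) with h4 | h4
      · -- then k * (b - a) = 0
        rw [if_pos h4]
        left; omega
      · rw [if_neg (by omega), if_pos (by omega)]
        have hkpos : 0 < k := by
          rcases Nat.eq_zero_or_pos k with hk0 | hk; · simp [hk0] at h3 h2; omega
          exact hk
        have h5 : t - (a - i) = k * (b - a) - 1 := by omega
        rw [h5, predMulMod k (b - a) hd hkpos]
        right; constructor <;> omega
    · rw [if_neg (by omega), if_neg (by omega)]
      left; omega

/-- Start positions of the pumped blocks. -/
def sFun (L : ℕ → ℕ) (m : ℕ) : ℕ := ∑ i ∈ Finset.range m, L i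

lemma sFun_zero (L : ℕ → ℕ) : sFun L 0 = 0 := by simp [sFun]

lemma sFun_succ (L : ℕ → ℕ) (m : ℕ) : sFun L (m+1) = sFun L m + L m :=
  Finset.sum_range_succ L m

lemma sFun_strictMono {L : ℕ → ℕ} (hL : ∀ m, 1 ≤ L m) : StrictMono (sFun L) :=
  strictMono_nat_of_lt_succ fun n => by rw [sFun_succ]; have := hL n; omega

lemma sFun_ge {L : ℕ → ℕ} (hL : ∀ m, 1 ≤ L m) : ∀ m, m ≤ sFun L m := by
  intro m
  induction m with
  | zero => simp [sFun_zero]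
  | succ m ih => rw [sFun_succ]; have := hL m; omega

/-- The block containing position `n`. -/
def blkOf (L : ℕ → ℕ) (n : ℕ) : ℕ := Nat.findGreatest (fun m => sFun L m ≤ n) n

lemma blkOf_spec {L : ℕ → ℕ} (hL : ∀ m, 1 ≤ L m) (n : ℕ) :
    sFun L (blkOf L n) ≤ n ∧ n < sFun L (blkOf L n + 1) := by
  constructor
  · have h0 : sFun L 0 ≤ n := by rw [sFun_zero]; exact Nat.zero_le n
    exact Nat.findGreatest_spec (P := fun m => sFun L m ≤ n) (Nat.zero_le n) h0
  · by_contra h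
    push_neg at h
    have h1 : blkOf L n + 1 ≤ n := le_trans (sFun_ge hL _) h
    exact Nat.findGreatest_is_greatest (Nat.lt_succ_self _) h1 h

lemma blkOf_eq {L : ℕ → ℕ} (hL : ∀ m, 1 ≤ L m) {m n : ℕ}
    (h1 : sFun L m ≤ n) (h2 : n < sFun L (m+1)) : blkOf L n = m := by
  obtain ⟨g1, g2⟩ := blkOf_spec hL n
  rcases Nat.lt_trichotomy (blkOf L n) m with h | h | h
  · have : sFun L (blkOf L n + 1) ≤ sFun L m := (sFun_strictMono hL).monotone (by omega)
    omega
  · exact h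
  · have : sFun L (m+1) ≤ sFun L (blkOf L n) := (sFun_strictMono hL).monotone (by omega)
    omega

/-- pumping preserves spacedness and fairness. Given a fair
pumpable path (with infinitely many changepoints) in a colored Büchi graph,
for every `k` there is a fair path (obtained by pumping each repetition) whose
induced coloring is `k`-spaced. -/
theorem pumping_spaced {Vt : Type} (E : Vt → Vt → Prop) (ℓ : Vt → Prop)
    (F : Vt → Prop) (ρ : ℕ → Vt)
    (hpath : ∀ n, E (ρ n) (ρ (n + 1)))
    (hfair : ∀ N, ∃ n, N < n ∧ F (ρ n))
    (hcp : InfCP (fun n => ℓ (ρ n)))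
    (hpump : ∀ i j, IsBlock (fun n => ℓ (ρ n)) i j →
      ∃ a b, i ≤ a ∧ a < b ∧ b < j ∧ ρ a = ρ b) :
    ∀ k : ℕ, ∃ ρ' : ℕ → Vt, ρ' 0 = ρ 0 ∧
      (∀ n, E (ρ' n) (ρ' (n + 1))) ∧
      (∀ N, ∃ n, N < n ∧ F (ρ' n)) ∧
      kSpaced (fun n => ℓ (ρ' n)) k := by
  intro k
  set c : ℕ → Prop := fun n => ℓ (ρ n) with hcdef
  set I : ℕ → ℕ := cpSeq c hcp with hIdef
  have hblock : ∀ m, IsBlock c (I m) (I (m+1)) := fun m => cpSeq_block c hcp m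
  have hI_lt : ∀ m, I m < I (m+1) := fun m => (hblock m).1
  have hI0 : I 0 = 0 := cpSeq_zero c hcp
  have hcover : ∀ n, ∃ m, I m ≤ n ∧ n < I (m+1) := cpSeq_cover c hcp
  have hImono : ∀ {m m'}, m ≤ m' → I m ≤ I m' :=
    fun h => (cpSeq_strictMono c hcp).monotone h
  have hadj : ∀ m, ¬ (c (I (m+1)) ↔ c (I m)) := cpSeq_adj c hcp
  choose A B hiA hAB hBj hrep using fun m => hpump _ _ (hblock m)
  set L : ℕ → ℕ := fun m => (I (m+1) - I m) + k * (B m - A m) with hLdef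
  have hLval : ∀ m, L m = (I (m+1) - I m) + k * (B m - A m) := fun m => rfl
  have hL1 : ∀ m, 1 ≤ L m := fun m => by
    have h1 := hI_lt m
    have h2 := hLval m
    omega
  set s : ℕ → ℕ := sFun L with hsdef
  have hs0 : s 0 = 0 := sFun_zero L
  have hs_succ : ∀ m, s (m+1) = s m + L m := fun m => sFun_succ L m
  have hs_mono : StrictMono s := sFun_strictMono hL1
  have hs_ge : ∀ m, m ≤ s m := sFun_ge hL1
  have hblk : ∀ m n, s m ≤ n → n < s (m+1) → blkOf L n = m :=
    fun m n h1 h2 => blkOf_eq hL1 h1 h2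
  have hblk_spec : ∀ n, s (blkOf L n) ≤ n ∧ n < s (blkOf L n + 1) :=
    fun n => blkOf_spec hL1 n
  set g : ℕ → ℕ :=
    fun n => gbFun (I (blkOf L n)) (A (blkOf L n)) (B (blkOf L n)) k (n - s (blkOf L n))
    with hgdef
  have hg : ∀ m n, s m ≤ n → n < s (m+1) → g n = gbFun (I m) (A m) (B m) k (n - s m) := by
    intro m n h1 h2
    simp only [hgdef, hblk m n h1 h2]
  have hgmem : ∀ m n, s m ≤ n → n < s (m+1) → I m ≤ g n ∧ g n < I (m+1) := by
    intro m n h1 h2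
    rw [hg m n h1 h2]
    refine gbFun_mem (hiA m) (hAB m) (hBj m) ?_
    have h3 := hs_succ m
    have h4 := hLval m
    omega
  have hcol : ∀ m n, s m ≤ n → n < s (m+1) → (ℓ (ρ (g n)) ↔ c (I m)) := by
    intro m n h1 h2
    have h3 := hgmem m n h1 h2
    exact block_color (hblock m) _ h3.1 h3.2
  have hCP : ∀ m, Changepoint (fun n => ℓ (ρ (g n))) (s m) := by
    intro m
    match m with
    | 0 => exact Or.inl hs0
    | m+1 =>
      refine Or.inr fun hiff => ?_
      have h1 := hcol m (s (m+1) - 1)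
        (by have := hs_succ m; have := hL1 m; omega)
        (by have := hs_succ m; have := hL1 m; omega)
      have h2 := hcol (m+1) (s (m+1)) le_rfl
        (by have := hs_succ (m+1); have := hL1 (m+1); omega)
      exact hadj m (h2.symm.trans (hiff.symm.trans h1))
  refine ⟨fun n => ρ (g n), ?_, ?_, ?_, ?_, ?_⟩
  · -- starts at ρ 0
    show ρ (g 0) = ρ 0
    have h1 : g 0 = gbFun (I 0) (A 0) (B 0) k 0 := by
      have := hg 0 0 (by omega) (by have := hs_succ 0; have := hL1 0; omega)
      simpa [hs0] using this
    rw [h1, gbFun_zero k (hiA 0) (hAB 0), hI0]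
  · -- edges
    intro n
    obtain ⟨h1, h2⟩ := hblk_spec n
    set m := blkOf L n with hm
    show E (ρ (g n)) (ρ (g (n+1)))
    rcases Nat.lt_or_ge (n+1) (s (m+1)) with hlt | hge
    · have e1 := hg m n h1 h2
      have e2 := hg m (n+1) (by omega) hlt
      have ht : (n+1) - s m = (n - s m) + 1 := by omega
      rw [ht] at e2
      have hstep := gbFun_step (k := k) (t := n - s m) (hiA m) (hAB m) (hBj m)
        (by have h3 := hs_succ m; have h4 := hLval m; omega)
      rcases hstep with hstep | ⟨ha, hb⟩
      · rw [e1, e2, hstep]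
        exact hpath _
      · have h7 : ρ (g (n+1)) = ρ (gbFun (I m) (A m) (B m) k (n - s m) + 1) := by
          rw [e2, ha, hrep m, hb]
        rw [e1, h7]
        exact hpath _
    · have hn1 : n + 1 = s (m+1) := by omega
      have e1 := hg m n h1 h2
      have e2 := hg (m+1) (n+1) (by omega)
        (by have := hs_succ (m+1); have := hL1 (m+1); omega)
      have hv2 : g (n+1) = I (m+1) := by
        rw [e2]
        have h3 : (n+1) - s (m+1) = 0 := by omega
        rw [h3]
        exact gbFun_zero k (hiA (m+1)) (hAB (m+1))
      have hv1 : g n = I (m+1) - 1 := by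
        rw [e1]
        have h3 : n - s m = (I (m+1) - I m) + k * (B m - A m) - 1 := by
          have h4 := hs_succ m
          have h5 := hLval m
          omega
        rw [h3]
        exact gbFun_last k (hiA m) (hAB m) (hBj m)
      rw [hv1, hv2]
      have h6 := hpath (I (m+1) - 1)
      rwa [show I (m+1) - 1 + 1 = I (m+1) from by have := hI_lt m; omega] at h6
  · -- fairness
    intro N
    obtain ⟨n₀, hn₀, hF⟩ := hfair (I (N+1))
    obtain ⟨m, hm1, hm2⟩ := hcover n₀
    have hmN : N + 1 ≤ m := by
      by_contra hcon
      have : I (m+1) ≤ I (N+1) := hImono (by omega)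
      omega
    obtain ⟨t, ht, hgt⟩ := gbFun_surj k (hiA m) (hAB m) (hBj m) n₀ hm1 hm2
    have hlt : s m + t < s (m+1) := by
      have h3 := hs_succ m
      have h4 := hLval m
      omega
    refine ⟨s m + t, by have := hs_ge m; omega, ?_⟩
    show F (ρ (g (s m + t)))
    have h5 : g (s m + t) = gbFun (I m) (A m) (B m) k t := by
      rw [hg m (s m + t) (by omega) hlt]
      congr 1
      omega
    rw [h5, hgt]
    exact hF
  · -- InfCP
    intro N
    exact ⟨s (N+1), by have := hs_ge (N+1); omega, hCP (N+1)⟩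
  · -- spacing
    have hint : ∀ m n, s m < n → n < s (m+1) →
        ¬ Changepoint (fun n => ℓ (ρ (g n))) n := by
      intro m n h1 h2 hcpn
      rcases hcpn with h0 | hne
      · omega
      · exact hne ((hcol m (n-1) (by omega) (by omega)).trans
          (hcol m n (by omega) h2).symm)
    have hchar : ∀ n, Changepoint (fun n => ℓ (ρ (g n))) n → ∃ m, n = s m := by
      intro n hn
      obtain ⟨h1, h2⟩ := hblk_spec n
      rcases eq_or_lt_of_le h1 with he | hl
      · exact ⟨blkOf L n, he.symm⟩
      · exact absurd hn (hint _ n hl h2)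
    intro i' j' hb
    obtain ⟨m1, rfl⟩ := hchar i' hb.2.1
    obtain ⟨m2, rfl⟩ := hchar j' hb.2.2.1
    have hm12 : m1 < m2 := by
      by_contra hcon
      have : s m2 ≤ s m1 := hs_mono.monotone (by omega)
      have := hb.1
      omega
    have hm2eq : m2 = m1 + 1 := by
      by_contra hcon
      exact hb.2.2.2 (s (m1+1)) (hs_mono (by omega)) (hs_mono (by omega)) (hCP (m1+1))
    subst hm2eq
    have h3 := hs_succ m1
    have h4 := hLval m1
    have hBA : 0 < B m1 - A m1 := by have := hAB m1; omega
    have hk : k * 1 ≤ k * (B m1 - A m1) := Nat.mul_le_mul_left k hBA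
    omega

end PLDLPaper
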